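/- For an invertible operator D and bounded operator a, the recursion [D,a]^{(k+1)} D^{-2k-3} = D^2 ([D,a]^{(k)} D^{-2k-1}) D^{-2} - [D,a]^{(k)} D^{-2k-1} implies by induction that [D,a]^{(k)} D^{-2k-1} = Σ_{j=0}^{k} (-1)^j C(k,j) (α^{2(k-j)+1}(a) - α^{2(k-j)}(a)) for all k ≥ 0. -/

import Mathlib

/-- Integer powers of an invertible bounded operator. -/
def zpD {H : Type*} [NormedAddCommGroup H] [InnerProductSpace ℂ H] [CompleteSpace H]
    (D : (H →L[ℂ] H)ˣ) (n : ℤ) : H →L[ℂ] H :=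
  ((D ^ n : (H →L[ℂ] H)ˣ) : H →L[ℂ] H)

/-- `∇(T) = [D², T]`. -/
def nablaD {H : Type*} [NormedAddCommGroup H] [InnerProductSpace ℂ H] [CompleteSpace H]
    (D : (H →L[ℂ] H)ˣ) (T : H →L[ℂ] H) : H →L[ℂ] H :=
  zpD D 2 * T - T * zpD D 2

/-- `α^m(a) = D^m a D^{-m}`. -/
def alphaD {H : Type*} [NormedAddCommGroup H] [InnerProductSpace ℂ H] [CompleteSpace H]
    (D : (H →L[ℂ] H)ˣ) (m : ℤ) (a : H →L[ℂ] H) : H →L[ℂ] H :=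
  zpD D m * a * zpD D (-m)

section Aux

variable {H : Type*} [NormedAddCommGroup H] [InnerProductSpace ℂ H] [CompleteSpace H]
    (D : (H →L[ℂ] H)ˣ)

lemma zpD_mul (m n : ℤ) : zpD D m * zpD D n = zpD D (m + n) := by
  simp [zpD, zpow_add, Units.val_mul]

lemma zpD_zero : zpD D 0 = 1 := by simp [zpD]

lemma conj2 (m : ℤ) (a : H →L[ℂ] H) :
    zpD D 2 * alphaD D m a * zpD D (-2) = alphaD D (m + 2) a := by
  simp only [alphaD, ← mul_assoc, zpD_mul]
  rw [mul_assoc, zpD_mul]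
  ring_nf

lemma sum_pascal {A : Type*} [AddCommGroup A] (T : ℤ → A) (k : ℕ) :
    ∑ j ∈ Finset.range (k+2), ((-1:ℤ)^j * ((k+1).choose j : ℤ)) • T ((k:ℤ)+1-j)
  = ∑ j ∈ Finset.range (k+1), ((-1:ℤ)^j * (k.choose j : ℤ)) • T ((k:ℤ)+1-j)
    - ∑ j ∈ Finset.range (k+1), ((-1:ℤ)^j * (k.choose j : ℤ)) • T ((k:ℤ)-j) := by
  rw [Finset.sum_range_succ' _ (k+1)]
  conv_rhs => rw [Finset.sum_range_succ' _ k]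
  have h1 : ∀ j ∈ Finset.range (k+1),
      ((-1:ℤ)^(j+1) * ((k+1).choose (j+1) : ℤ)) • T ((k:ℤ)+1-(j+1 : ℕ))
    = ((-1:ℤ)^(j+1) * (k.choose (j+1) : ℤ)) • T ((k:ℤ)-j)
      - ((-1:ℤ)^j * (k.choose j : ℤ)) • T ((k:ℤ)-j) := by
    intro j _
    have harg : ((k:ℤ)+1-(j+1 : ℕ)) = (k:ℤ)-j := by push_cast; ring
    have hc : ((-1:ℤ)^(j+1) * ((k+1).choose (j+1) : ℤ))
        = ((-1:ℤ)^(j+1) * (k.choose (j+1) : ℤ)) - ((-1:ℤ)^j * (k.choose j : ℤ)) := by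
      rw [Nat.choose_succ_succ]
      push_cast
      ring
    rw [harg, hc, sub_smul]
  rw [Finset.sum_congr rfl h1, Finset.sum_sub_distrib]
  have h2 : ∑ j ∈ Finset.range (k+1), ((-1:ℤ)^(j+1) * (k.choose (j+1) : ℤ)) • T ((k:ℤ)-j)
      = ∑ j ∈ Finset.range k, ((-1:ℤ)^(j+1) * (k.choose (j+1) : ℤ)) • T ((k:ℤ)+1-(j+1 : ℕ)) := by
    rw [Finset.sum_range_succ]
    simp only [Nat.choose_succ_self, Nat.cast_zero, mul_zero, zero_smul, add_zero]
    refine Finset.sum_congr rfl fun j _ => ?_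
    congr 1
    push_cast; ring
  rw [h2]
  simp only [pow_zero, one_mul, Nat.choose_zero_right, Nat.cast_one, Nat.cast_zero, sub_zero]
  abel

end Aux

/-- the recursion
`[D,a]^{(k+1)} D^{-2k-3} = D² ([D,a]^{(k)} D^{-2k-1}) D^{-2} - [D,a]^{(k)} D^{-2k-1}`
holds, and implies by induction that
`[D,a]^{(k)} D^{-2k-1} = Σ_{j=0}^{k} (-1)^j C(k,j) (α^{2(k-j)+1}(a) - α^{2(k-j)}(a))`
for all `k ≥ 0`, where `[D,a]^{(k)} = ∇^k(Da - aD)` and `α^m(a) = D^m a D^{-m}`. -/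
theorem stmt7 {H : Type*} [NormedAddCommGroup H] [InnerProductSpace ℂ H] [CompleteSpace H]
    (D : (H →L[ℂ] H)ˣ) (a : H →L[ℂ] H) :
    (∀ k : ℕ,
      (nablaD D)^[k + 1] ((D : H →L[ℂ] H) * a - a * (D : H →L[ℂ] H)) *
          zpD D (-(2 * (k : ℤ)) - 3) =
        zpD D 2 *
            ((nablaD D)^[k] ((D : H →L[ℂ] H) * a - a * (D : H →L[ℂ] H)) *
              zpD D (-(2 * (k : ℤ)) - 1)) * zpD D (-2) -
          (nablaD D)^[k] ((D : H →L[ℂ] H) * a - a * (D : H →L[ℂ] H)) *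
            zpD D (-(2 * (k : ℤ)) - 1)) ∧
    (∀ k : ℕ,
      (nablaD D)^[k] ((D : H →L[ℂ] H) * a - a * (D : H →L[ℂ] H)) *
          zpD D (-(2 * (k : ℤ)) - 1) =
        ∑ j ∈ Finset.range (k + 1),
          ((-1 : ℤ) ^ j * (k.choose j : ℤ)) •
            (alphaD D (2 * ((k : ℤ) - j) + 1) a - alphaD D (2 * ((k : ℤ) - j)) a)) := by
  have hrec : ∀ k : ℕ,
      (nablaD D)^[k + 1] ((D : H →L[ℂ] H) * a - a * (D : H →L[ℂ] H)) *
          zpD D (-(2 * (k : ℤ)) - 3) =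
        zpD D 2 *
            ((nablaD D)^[k] ((D : H →L[ℂ] H) * a - a * (D : H →L[ℂ] H)) *
              zpD D (-(2 * (k : ℤ)) - 1)) * zpD D (-2) -
          (nablaD D)^[k] ((D : H →L[ℂ] H) * a - a * (D : H →L[ℂ] H)) *
            zpD D (-(2 * (k : ℤ)) - 1) := by
    intro k
    rw [Function.iterate_succ_apply']
    have e2 : (-(2 * (k:ℤ)) - 1) + (-2) = -(2 * (k:ℤ)) - 3 := by ring
    have e3 : (2:ℤ) + (-(2 * (k:ℤ)) - 3) = -(2 * (k:ℤ)) - 1 := by ring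
    simp only [nablaD, sub_mul, mul_assoc, zpD_mul, e2, e3]
  refine ⟨hrec, ?_⟩
  intro k
  induction k with
  | zero =>
      simp only [Function.iterate_zero, id_eq, Finset.range_one, Finset.sum_singleton,
        Nat.choose_self, Nat.cast_zero, Nat.cast_one, pow_zero, one_mul, one_smul]
      norm_num
      rw [show (D : H →L[ℂ] H) = zpD D 1 by simp [zpD]]
      simp only [alphaD, sub_mul, mul_assoc, zpD_mul]
      norm_num [zpD_zero]
  | succ k ih =>
      have h := hrec k
      push_cast
      rw [show -(2 * ((k:ℤ)+1)) - 1 = -(2*(k:ℤ)) - 3 by ring]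
      rw [h, ih]
      rw [Finset.mul_sum, Finset.sum_mul]
      have hterm : ∀ j ∈ Finset.range (k+1),
          zpD D 2 * (((-1:ℤ)^j * (k.choose j : ℤ)) •
            (alphaD D (2 * ((k:ℤ) - j) + 1) a - alphaD D (2 * ((k:ℤ) - j)) a)) * zpD D (-2)
          = ((-1:ℤ)^j * (k.choose j : ℤ)) •
            (alphaD D (2 * ((k:ℤ)+1 - j) + 1) a - alphaD D (2 * ((k:ℤ)+1 - j)) a) := by
        intro j _
        rw [mul_smul_comm, smul_mul_assoc]
        congr 1
        rw [mul_sub, sub_mul, conj2, conj2]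
        congr 2 <;> ring
      rw [Finset.sum_congr rfl hterm]
      have := sum_pascal (fun m => alphaD D (2 * m + 1) a - alphaD D (2 * m) a) k
      beta_reduce at this
      rw [← this]
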